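/- Let n ≥ 1, let a > 0 be a real number, and let a_0, …, a_n be real numbers with 0 < a_0·a^n ≤ a_1·a^{n−1} ≤ ⋯ ≤ a_{n−1}·a ≤ a_n. Define p(q) = ∑_{k=0}^{n} q^k · a_k for q ∈ ℍ. Then every quaternion q with p(q) = 0 satisfies ‖q‖ ≤ 1/a. -/

import Mathlib

open Finset

/-- Rescaled Eneström–Kakeya Theorem for quaternionic polynomials: if
`0 < a₀·r^n ≤ a₁·r^(n−1) ≤ ⋯ ≤ a_{n−1}·r ≤ a_n` for some `r > 0`, then all zeros of
`p(q) = ∑ q^k a_k` lie in `‖q‖ ≤ 1/r`. -/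
theorem enestrom_kakeya_quaternion_scaled (n : ℕ) (hn : 1 ≤ n)
    (r : ℝ) (hr : 0 < r) (a : ℕ → ℝ)
    (ha0 : 0 < a 0 * r ^ n)
    (hmono : ∀ k < n, a k * r ^ (n - k) ≤ a (k + 1) * r ^ (n - (k + 1)))
    (q : Quaternion ℝ)
    (hq : ∑ k ∈ Finset.range (n + 1), q ^ k * (a k : Quaternion ℝ) = 0) :
    ‖q‖ ≤ 1 / r := by
  set b : ℕ → ℝ := fun k => a k * r ^ (n - k) with hbdef
  have hb0 : 0 < b 0 := by simpa [hbdef] using ha0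
  have hbstep : ∀ k < n, b k ≤ b (k + 1) := hmono
  have hbmono : ∀ k, k ≤ n → b 0 ≤ b k := by
    intro k hk
    induction k with
    | zero => exact le_rfl
    | succ m ih =>
        exact (ih (Nat.le_of_lt (Nat.lt_of_succ_le hk))).trans
          (hbstep m (Nat.lt_of_succ_le hk))
  have hbn : 0 < b n := hb0.trans_le (hbmono n le_rfl)
  set w : Quaternion ℝ := q * ((r : ℝ) : Quaternion ℝ) with hwdef
  -- rescaled sum
  have hwsum : ∑ k ∈ Finset.range (n + 1), w ^ k * ((b k : ℝ) : Quaternion ℝ) = 0 := by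
    have step : ∀ k ∈ Finset.range (n + 1),
        w ^ k * ((b k : ℝ) : Quaternion ℝ)
          = q ^ k * ((a k : ℝ) : Quaternion ℝ) * (((r : ℝ) : Quaternion ℝ)) ^ n := by
      intro k hk
      have hk' : k ≤ n := Nat.lt_succ_iff.mp (Finset.mem_range.mp hk)
      have hcomm : Commute q (((r : ℝ) : Quaternion ℝ)) :=
        (Quaternion.coe_commute r q).symm
      have hpow : w ^ k = q ^ k * (((r : ℝ) : Quaternion ℝ)) ^ k := by
        rw [hwdef, hcomm.mul_pow]
      have hb' : r ^ k * b k = a k * r ^ n := by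
        rw [hbdef]
        have : r ^ k * r ^ (n - k) = r ^ n := by
          rw [← pow_add, Nat.add_sub_cancel' hk']
        ring_nf
        rw [mul_comm (r ^ k) (r ^ (n - k)), ← pow_add, Nat.sub_add_cancel hk']
      calc w ^ k * ((b k : ℝ) : Quaternion ℝ)
          = q ^ k * ((((r : ℝ)) ^ k * b k : ℝ) : Quaternion ℝ) := by
            rw [hpow, mul_assoc, Quaternion.coe_mul, Quaternion.coe_pow]
            congr 1
            simp only [hbdef]
            simp [Quaternion.coe_mul, Quaternion.coe_pow]
        _ = q ^ k * ((a k * r ^ n : ℝ) : Quaternion ℝ) := by rw [hb']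
        _ = q ^ k * ((a k : ℝ) : Quaternion ℝ) * (((r : ℝ) : Quaternion ℝ)) ^ n := by
            rw [Quaternion.coe_mul, Quaternion.coe_pow, mul_assoc]
    rw [Finset.sum_congr rfl step, ← Finset.sum_mul, hq, zero_mul]
  -- telescoping identity
  have key : w ^ (n + 1) * ((b n : ℝ) : Quaternion ℝ)
      = ((b 0 : ℝ) : Quaternion ℝ)
        + ∑ k ∈ Finset.range n, w ^ (k + 1) * ((b (k + 1) - b k : ℝ) : Quaternion ℝ) := by
    have h1 : (0 : Quaternion ℝ)
        = ∑ k ∈ Finset.range n, w ^ (k + 1) * ((b k : ℝ) : Quaternion ℝ)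
          + w ^ (n + 1) * ((b n : ℝ) : Quaternion ℝ) := by
      calc (0 : Quaternion ℝ) = w * 0 := (mul_zero w).symm
        _ = w * ∑ k ∈ Finset.range (n + 1), w ^ k * ((b k : ℝ) : Quaternion ℝ) := by
            rw [hwsum]
        _ = ∑ k ∈ Finset.range (n + 1), w ^ (k + 1) * ((b k : ℝ) : Quaternion ℝ) := by
            rw [Finset.mul_sum]
            exact Finset.sum_congr rfl fun k _ => by rw [← mul_assoc, ← pow_succ']
        _ = _ := Finset.sum_range_succ _ _
    have h2 : (0 : Quaternion ℝ)
        = ∑ k ∈ Finset.range n, w ^ (k + 1) * ((b (k + 1) : ℝ) : Quaternion ℝ)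
          + ((b 0 : ℝ) : Quaternion ℝ) := by
      rw [← hwsum, Finset.sum_range_succ']
      simp
    have hA : w ^ (n + 1) * ((b n : ℝ) : Quaternion ℝ)
        = -∑ k ∈ Finset.range n, w ^ (k + 1) * ((b k : ℝ) : Quaternion ℝ) :=
      by rw [eq_neg_iff_add_eq_zero,
          add_comm (w ^ (n + 1) * ((b n : ℝ) : Quaternion ℝ))]; exact h1.symm
    have hB : ((b 0 : ℝ) : Quaternion ℝ)
        = -∑ k ∈ Finset.range n, w ^ (k + 1) * ((b (k + 1) : ℝ) : Quaternion ℝ) :=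
      by rw [eq_neg_iff_add_eq_zero, add_comm (((b 0 : ℝ) : Quaternion ℝ))]; exact h2.symm
    have hsplit : ∑ k ∈ Finset.range n, w ^ (k + 1) * ((b (k + 1) - b k : ℝ) : Quaternion ℝ)
        = ∑ k ∈ Finset.range n, w ^ (k + 1) * ((b (k + 1) : ℝ) : Quaternion ℝ)
          - ∑ k ∈ Finset.range n, w ^ (k + 1) * ((b k : ℝ) : Quaternion ℝ) := by
      rw [← Finset.sum_sub_distrib]
      exact Finset.sum_congr rfl fun k _ => by
        rw [Quaternion.coe_sub, mul_sub]
    rw [hA, hB, hsplit]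
    abel
  -- norms
  by_contra hcon
  push_neg at hcon
  have htw : 1 < ‖w‖ := by
    have hnw : ‖w‖ = ‖q‖ * r := by
      rw [hwdef, norm_mul, Quaternion.norm_coe, Real.norm_eq_abs, abs_of_pos hr]
    rw [hnw]
    rw [div_lt_iff₀ hr] at hcon
    linarith
  set t := ‖w‖ with htdef
  have ht0 : 0 < t := lt_trans one_pos htw
  have hnorm1 : ‖w ^ (n + 1) * ((b n : ℝ) : Quaternion ℝ)‖ = b n * t ^ (n + 1) := by
    rw [norm_mul, norm_pow, Quaternion.norm_coe, Real.norm_eq_abs, abs_of_pos hbn]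
    ring
  have hnorm2 : ‖((b 0 : ℝ) : Quaternion ℝ)
        + ∑ k ∈ Finset.range n, w ^ (k + 1) * ((b (k + 1) - b k : ℝ) : Quaternion ℝ)‖
      ≤ b 0 + ∑ k ∈ Finset.range n, (b (k + 1) - b k) * t ^ (k + 1) := by
    refine (norm_add_le _ _).trans ?_
    have h01 : ‖((b 0 : ℝ) : Quaternion ℝ)‖ = b 0 := by
      rw [Quaternion.norm_coe, Real.norm_eq_abs, abs_of_pos hb0]
    rw [h01]
    refine add_le_add le_rfl ((norm_sum_le _ _).trans ?_)
    refine Finset.sum_le_sum fun k hk => ?_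
    have hk' : k < n := Finset.mem_range.mp hk
    rw [norm_mul, norm_pow, Quaternion.norm_coe, Real.norm_eq_abs,
      abs_of_nonneg (sub_nonneg.mpr (hbstep k hk'))]
    exact le_of_eq (mul_comm _ _)
  have hbound : b 0 + ∑ k ∈ Finset.range n, (b (k + 1) - b k) * t ^ (k + 1)
      ≤ (b 0 + ∑ k ∈ Finset.range n, (b (k + 1) - b k)) * t ^ n := by
    rw [add_mul, Finset.sum_mul]
    have h1 : b 0 ≤ b 0 * t ^ n :=
      le_mul_of_one_le_right hb0.le ((one_le_pow₀ htw.le))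
    refine add_le_add h1 (Finset.sum_le_sum fun k hk => ?_)
    have hk' : k + 1 ≤ n := Finset.mem_range.mp hk
    exact mul_le_mul_of_nonneg_left (pow_le_pow_right₀ htw.le hk')
      (sub_nonneg.mpr (hbstep k (Finset.mem_range.mp hk)))
  have htel : b 0 + ∑ k ∈ Finset.range n, (b (k + 1) - b k) = b n := by
    rw [Finset.sum_range_sub b]
    ring
  have hfinal : b n * t ^ (n + 1) ≤ b n * t ^ n := by
    calc b n * t ^ (n + 1) = ‖w ^ (n + 1) * ((b n : ℝ) : Quaternion ℝ)‖ := hnorm1.symm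
      _ = ‖((b 0 : ℝ) : Quaternion ℝ)
            + ∑ k ∈ Finset.range n, w ^ (k + 1) * ((b (k + 1) - b k : ℝ) : Quaternion ℝ)‖ := by
          rw [key]
      _ ≤ b 0 + ∑ k ∈ Finset.range n, (b (k + 1) - b k) * t ^ (k + 1) := hnorm2
      _ ≤ (b 0 + ∑ k ∈ Finset.range n, (b (k + 1) - b k)) * t ^ n := hbound
      _ = b n * t ^ n := by rw [htel]
  have ht1 : t ≤ 1 := by
    have h := (mul_le_mul_iff_right₀ hbn).mp hfinal
    rw [pow_succ] at h
    nlinarith [pow_pos ht0 n]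
  linarith
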